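/- arXiv:2411.15337 — 7 statements merged into one kernel-verified Lean document; each statement's English description precedes it below -/
import Mathlib

section
/- (Pettis' Lemma) If A is a non-meagre subset with the Baire property of a topological group G, then A^{-1}A is a neighborhood of the identity. -/
open Set

variable {X : Type*} [TopologicalSpace X]

lemma myIsMeagre_union {s t : Set X} (hs : IsMeagre s) (ht : IsMeagre t) :
    IsMeagre (s ∪ t) := by
  rw [IsMeagre, compl_union]; exact Filter.inter_mem hs ht

lemma nwd_isMeagre {s : Set X} (hs : IsNowhereDense s) : IsMeagre s :=
  isMeagre_iff_countable_union_isNowhereDense.mpr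
    ⟨{s}, by simpa using hs, countable_singleton s, by simp⟩

/-- frontier of an open set is nowhere dense -/
lemma myFrontierNwd {D : Set X} (hD : IsOpen D) : IsNowhereDense (closure D \ D) := by
  have hclosed : IsClosed (closure D \ D) := isClosed_closure.sdiff hD
  rw [hclosed.isNowhereDense_iff]
  rw [eq_empty_iff_forall_notMem]
  intro z hz
  have hzc : z ∈ closure D := (interior_subset hz).1
  have : (interior (closure D \ D) ∩ D).Nonempty := by
    rcases mem_closure_iff.mp hzc _ isOpen_interior hz with ⟨w, hw⟩
    exact ⟨w, hw⟩
  rcases this with ⟨w, hw1, hw2⟩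
  exact (interior_subset hw1).2 hw2

/-- union over a pairwise disjoint family of open sets of (closed nwd set ∩ member) is nwd -/
lemma myNwdUnion (𝒞 : Set (Set X)) (hdisj : 𝒞.PairwiseDisjoint id)
    (hopen : ∀ O ∈ 𝒞, IsOpen O) (F : Set X → Set X)
    (hF : ∀ O ∈ 𝒞, IsClosed (F O) ∧ IsNowhereDense (F O)) :
    IsNowhereDense (⋃ O ∈ 𝒞, F O ∩ O) := by
  set T : Set X := ⋃ O ∈ 𝒞, F O ∩ O with hT
  rw [IsNowhereDense, eq_empty_iff_forall_notMem]
  intro z hz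
  -- z ∈ interior (closure T); the open set interior (closure T) meets T
  have hzc : z ∈ closure T := interior_subset hz
  obtain ⟨y, hy1, hy2⟩ : (interior (closure T) ∩ T).Nonempty :=
    mem_closure_iff.mp hzc _ isOpen_interior hz
  simp only [hT, mem_iUnion] at hy2
  obtain ⟨O, hO𝒞, hyF, hyO⟩ : ∃ O ∈ 𝒞, y ∈ F O ∧ y ∈ O := by
    rcases hy2 with ⟨O, hO, hy⟩; exact ⟨O, hO, hy.1, hy.2⟩
  -- Q := interior (closure T) ∩ O is nonempty, open, and contained in F O
  have hQsub : interior (closure T) ∩ O ⊆ F O := by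
    intro w ⟨hw1, hw2⟩
    have hwc : w ∈ closure T := interior_subset hw1
    rw [← (hF O hO𝒞).1.closure_eq]
    rw [mem_closure_iff] at hwc ⊢
    intro N hN hwN
    obtain ⟨u, ⟨huN, huO⟩, huT⟩ := hwc (N ∩ O) (hN.inter (hopen O hO𝒞)) ⟨hwN, hw2⟩
    simp only [hT, mem_iUnion] at huT
    obtain ⟨O', hO', huT⟩ := huT
    have : O' = O := by
      by_contra hne
      exact (hdisj hO' hO𝒞 hne).ne_of_mem huT.2 huO rfl
    exact ⟨u, huN, this ▸ huT.1⟩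
  have hQopen : IsOpen (interior (closure T) ∩ O) := isOpen_interior.inter (hopen O hO𝒞)
  have hQne : (interior (closure T) ∩ O).Nonempty := ⟨y, hy1, hyO⟩
  have : interior (closure T) ∩ O ⊆ interior (closure (F O)) :=
    hQopen.subset_interior_iff.mpr (hQsub.trans subset_closure)
  rw [(hF O hO𝒞).2] at this
  exact hQne.ne_empty (subset_empty_iff.mp this)

/-- Banach category theorem (localization form): a set which is meagre in a
neighbourhood of each of its points is meagre. -/
lemma myBanachCategory {A : Set X}
    (h : ∀ x ∈ A, ∃ O : Set X, IsOpen O ∧ x ∈ O ∧ IsMeagre (O ∩ A)) : IsMeagre A := by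
  classical
  set S : Set (Set (Set X)) :=
    {𝒞 | (∀ O ∈ 𝒞, IsOpen O ∧ O.Nonempty ∧ IsMeagre (O ∩ A)) ∧ 𝒞.PairwiseDisjoint id} with hS
  obtain ⟨𝒞, h𝒞max⟩ : ∃ 𝒞, Maximal (· ∈ S) 𝒞 := by
    apply zorn_subset
    intro c hcS hchain
    refine ⟨⋃₀ c, ⟨?_, ?_⟩, fun s hs => subset_sUnion_of_mem hs⟩
    · rintro O hO
      rcases mem_sUnion.mp hO with ⟨𝒟, h𝒟, hO𝒟⟩
      exact (hcS h𝒟).1 O hO𝒟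
    · intro O₁ hO₁ O₂ hO₂ hne
      rcases mem_sUnion.mp hO₁ with ⟨𝒟₁, h𝒟₁, h₁⟩
      rcases mem_sUnion.mp hO₂ with ⟨𝒟₂, h𝒟₂, h₂⟩
      rcases hchain.total h𝒟₁ h𝒟₂ with hle | hle
      · exact (hcS h𝒟₂).2 (hle h₁) h₂ hne
      · exact (hcS h𝒟₁).2 h₁ (hle h₂) hne
  have h𝒞 := h𝒞max.prop
  set D : Set X := ⋃₀ 𝒞 with hD
  have hDopen : IsOpen D := isOpen_sUnion (fun O hO => (h𝒞.1 O hO).1)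
  -- A ⊆ closure D
  have hAD : A ⊆ closure D := by
    intro x hx
    by_contra hxD
    obtain ⟨O, hOopen, hxO, hOm⟩ := h x hx
    set O' : Set X := O \ closure D with hO'
    have hO'open : IsOpen O' := hOopen.sdiff isClosed_closure
    have hxO' : x ∈ O' := ⟨hxO, hxD⟩
    have hO'm : IsMeagre (O' ∩ A) := hOm.mono (inter_subset_inter_left _ diff_subset)
    have hnew : insert O' 𝒞 ∈ S := by
      constructor
      · rintro P hP
        rcases hP with rfl | hP
        · exact ⟨hO'open, ⟨x, hxO'⟩, hO'm⟩
        · exact h𝒞.1 P hP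
      · intro P₁ hP₁ P₂ hP₂ hne
        have key : ∀ Q ∈ 𝒞, Disjoint O' Q := by
          intro Q hQ
          refine Set.disjoint_left.mpr fun z hz hzQ => hz.2 ?_
          exact subset_closure (mem_sUnion.mpr ⟨Q, hQ, hzQ⟩)
        rcases hP₁ with rfl | hP₁ <;> rcases hP₂ with rfl | hP₂
        · exact absurd rfl hne
        · exact key P₂ hP₂
        · exact (key P₁ hP₁).symm
        · exact h𝒞.2 hP₁ hP₂ hne
    have : O' ∈ 𝒞 := h𝒞max.2 hnew (subset_insert _ _) (mem_insert _ _)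
    exact hxD (subset_closure (mem_sUnion.mpr ⟨O', this, hxO'⟩))
  -- A ∩ D is meagre
  have hADm : IsMeagre (A ∩ D) := by
    -- choose closed nwd covers for each O ∈ 𝒞
    have hchoice : ∀ O : Set X, O ∈ 𝒞 → ∃ f : ℕ → Set X,
        (∀ n, IsClosed (f n) ∧ IsNowhereDense (f n)) ∧ O ∩ A ⊆ ⋃ n, f n := by
      intro O hO
      obtain ⟨T, hTnwd, hTc, hTsub⟩ :=
        isMeagre_iff_countable_union_isNowhereDense.mp (h𝒞.1 O hO).2.2
      obtain ⟨f, hf⟩ := (hTc.insert ∅).exists_eq_range (insert_nonempty _ _)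
      refine ⟨fun n => closure (f n), fun n => ⟨isClosed_closure, ?_⟩, ?_⟩
      · have : f n ∈ insert ∅ T := hf ▸ mem_range_self n
        rcases this with h' | h'
        · show IsNowhereDense (closure (f n))
          rw [h', closure_empty]; exact isNowhereDense_empty
        · exact (hTnwd _ h').closure
      · refine hTsub.trans ?_
        intro z hz
        rcases hz with ⟨t, ht, hzt⟩
        have : t ∈ range f := by rw [← hf]; exact mem_insert_of_mem _ ht
        rcases this with ⟨n, rfl⟩
        exact mem_iUnion.mpr ⟨n, subset_closure hzt⟩
    choose! f hf1 hf2 using hchoice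
    have hsub : A ∩ D ⊆ ⋃ n, ⋃ O ∈ 𝒞, f O n ∩ O := by
      rintro z ⟨hzA, hzD⟩
      rcases mem_sUnion.mp hzD with ⟨O, hO, hzO⟩
      have : z ∈ ⋃ n, f O n := hf2 O hO ⟨hzO, hzA⟩
      rcases mem_iUnion.mp this with ⟨n, hn⟩
      exact mem_iUnion.mpr ⟨n, mem_iUnion₂.mpr ⟨O, hO, hn, hzO⟩⟩
    refine (isMeagre_iUnion fun n => ?_).mono hsub
    exact nwd_isMeagre (myNwdUnion 𝒞 h𝒞.2 (fun O hO => (h𝒞.1 O hO).1) (fun O => f O n)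
      (fun O hO => hf1 O hO n))
  have : A ⊆ (A ∩ D) ∪ (closure D \ D) := by
    intro x hx
    by_cases hxD : x ∈ D
    · exact Or.inl ⟨hx, hxD⟩
    · exact Or.inr ⟨hAD hx, hxD⟩
  exact (myIsMeagre_union hADm (nwd_isMeagre (myFrontierNwd hDopen))).mono this
open Pointwise
/-- Pettis' Lemma: if `A` is a non-meagre subset with the Baire property of a topological
group `G`, then `A⁻¹A` is a neighborhood of the identity. -/
theorem stmt3 {G : Type} [Group G] [TopologicalSpace G] [IsTopologicalGroup G]
    (A : Set G) (hA : ¬ IsMeagre A)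
    (hBP : ∃ U : Set G, IsOpen U ∧ IsMeagre (symmDiff A U)) :
    A⁻¹ * A ∈ nhds (1 : G) := by
  classical
  obtain ⟨U, hUo, hm⟩ := hBP
  have hAU : IsMeagre (A \ U) := hm.mono (by rw [Set.symmDiff_def]; exact Set.subset_union_left)
  have hUA : IsMeagre (U \ A) := hm.mono (by rw [Set.symmDiff_def]; exact Set.subset_union_right)
  -- U is non-meagre
  have hU : ¬ IsMeagre U := by
    intro hUm
    refine hA ((myIsMeagre_union hUm hAU).mono fun x hx => ?_)
    by_cases hxU : x ∈ U
    · exact Or.inl hxU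
    · exact Or.inr ⟨hx, hxU⟩
  -- find a point x where U is non-meagre locally
  have hx : ∃ x ∈ U, ∀ O : Set G, IsOpen O → x ∈ O → ¬ IsMeagre (O ∩ U) := by
    by_contra hcon
    push_neg at hcon
    exact hU (myBanachCategory fun x hxU => by
      obtain ⟨O, hOopen, hxO, hOm⟩ := hcon x hxU
      exact ⟨O, hOopen, hxO, hOm⟩)
  obtain ⟨x, hxU, hxloc⟩ := hx
  -- U' := x⁻¹ • U as a preimage, a neighbourhood of 1
  have hU' : (x * ·) ⁻¹' U ∈ nhds (1 : G) := by
    refine (hUo.preimage (continuous_const.mul continuous_id)).mem_nhds ?_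
    simpa using hxU
  obtain ⟨V, hV, hVdiv⟩ := exists_nhds_split_inv hU'
  refine Filter.mem_of_superset (Filter.inter_mem hV hU') ?_
  rintro g ⟨hgV, hgU'⟩
  -- the right translation y ↦ y * g⁻¹
  set R : G → G := fun y => y * g⁻¹ with hR
  have hRcont : Continuous R := continuous_id.mul continuous_const
  have hRopen : IsOpenMap R := (Homeomorph.mulRight g⁻¹).isOpenMap
  -- open neighbourhood O of x inside x • V
  have hPV : (x⁻¹ * ·) ⁻¹' V ∈ nhds x := by
    have := (Homeomorph.mulLeft x⁻¹).continuous.tendsto x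
    apply this
    simpa using hV
  obtain ⟨O, hOsub, hOopen, hxO⟩ := mem_nhds_iff.mp hPV
  have hnm : ¬ IsMeagre (O ∩ U) := hxloc O hOopen hxO
  -- the key: find y ∈ A with y * g⁻¹ ∈ A
  have hkey : (A ∩ R ⁻¹' A).Nonempty := by
    by_contra hemp
    rw [Set.not_nonempty_iff_eq_empty] at hemp
    apply hnm
    refine (myIsMeagre_union hUA (hUA.preimage_of_isOpenMap hRcont hRopen)).mono ?_
    rintro y ⟨hyO, hyU⟩
    have hyV : x⁻¹ * y ∈ V := hOsub hyO
    have hyg : R y ∈ U := by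
      have := hVdiv _ hyV _ hgV
      simp only [Set.mem_preimage] at this ⊢
      have h1 : x * (x⁻¹ * y / g) = y * g⁻¹ := by
        rw [div_eq_mul_inv, mul_assoc, mul_inv_cancel_left]
      rw [hR]
      simpa [h1] using this
    by_cases hyA : y ∈ A
    · by_cases hyA' : R y ∈ A
      · exact (Set.eq_empty_iff_forall_notMem.mp hemp y ⟨hyA, hyA'⟩).elim
      · exact Or.inr ⟨hyg, hyA'⟩
    · exact Or.inl ⟨hyU, hyA⟩
  obtain ⟨y, hyA, hyA'⟩ := hkey
  refine ⟨(y * g⁻¹)⁻¹, ?_, y, hyA, by simp [mul_inv_rev, mul_assoc]⟩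
  rw [Set.mem_inv]
  simpa using hyA'
end

section
/- Let G be a topological group and A \subset G. Suppose A has the following property: for every nested sequence of open sets V_1 \subset V_2 \subset \cdots exhausting G with V_n V_n \subset V_{n+1} for all n, there exists n with A \subset V_n. Then whenever G acts continuously by isometries on a metric space (X, d), every A-orbit is bounded (i.e. A is coarsely bounded in G). -/
open Pointwise

/-- If `A` is contained in some member of every nested exhausting open sequence `(V_n)`
with `V_n V_n ⊆ V_{n+1}`, then every `A`-orbit of every continuous isometric action of
`G` on a metric space is bounded (i.e. `A` is coarsely bounded in `G`). -/
theorem stmt4 {G : Type} [Group G] [TopologicalSpace G] (A : Set G)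
    (hA : ∀ V : ℕ → Set G, (∀ n, IsOpen (V n)) → (∀ n, V n ⊆ V (n + 1)) →
      (⋃ n, V n) = Set.univ → (∀ n, V n * V n ⊆ V (n + 1)) → ∃ n, A ⊆ V n) :
    ∀ (X : Type) [MetricSpace X] [MulAction G X],
      Continuous (fun p : G × X => p.1 • p.2) →
      (∀ g : G, Isometry (fun x : X => g • x)) →
      ∀ x : X, Bornology.IsBounded ((fun g => g • x) '' A) := by
  intro X _ _ hc hiso x
  set V : ℕ → Set G := fun n => {g | dist (g • x) x < 2 ^ n} with hVdef
  have hcont : Continuous fun g : G => g • x :=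
    hc.comp (continuous_id.prodMk continuous_const)
  have hopen : ∀ n, IsOpen (V n) := fun n =>
    isOpen_lt (hcont.dist continuous_const) continuous_const
  have hmono : ∀ n, V n ⊆ V (n + 1) := by
    intro n g hg
    have : (2 : ℝ) ^ n < 2 ^ (n + 1) := by
      apply pow_lt_pow_right₀ <;> norm_num
    exact lt_trans hg this
  have hunion : (⋃ n, V n) = Set.univ := by
    ext g
    simp only [Set.mem_iUnion, Set.mem_univ, iff_true]
    obtain ⟨n, hn⟩ := exists_nat_gt (dist (g • x) x)
    refine ⟨n, lt_of_lt_of_le hn ?_⟩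
    calc (n : ℝ) ≤ 2 ^ n := by exact_mod_cast (Nat.lt_two_pow_self (n := n)).le
    _ = 2 ^ n := rfl
  have hmul : ∀ n, V n * V n ⊆ V (n + 1) := by
    intro n g hg
    obtain ⟨a, ha, b, hb, rfl⟩ := hg
    have h1 : dist ((a * b) • x) (a • x) = dist (b • x) x := by
      rw [mul_smul]
      exact (hiso a).dist_eq (b • x) x
    have : dist ((a * b) • x) x ≤ dist ((a * b) • x) (a • x) + dist (a • x) x :=
      dist_triangle _ _ _
    have := this.trans_lt (by rw [h1]; exact add_lt_add hb ha)
    show dist ((a * b) • x) x < 2 ^ (n + 1)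
    have h2 : (2:ℝ)^(n+1) = 2^n + 2^n := by ring
    linarith
  obtain ⟨n, hn⟩ := hA V hopen hmono hunion hmul
  apply Bornology.IsBounded.subset (Metric.isBounded_ball (x := x) (r := 2 ^ n))
  rintro _ ⟨g, hg, rfl⟩
  exact hn hg
end

section
/- Let G be a topological group such that for every identity neighborhood U there is a countable set C with G generated by U \cup C. If A \subset G satisfies the property that for every nested sequence of open sets V_1 \subset V_2 \subset \cdots exhausting G with V_n V_n \subset V_{n+1} there is n with A \subset V_n, then for every identity neighborhood U there exist a finite set F \subset G and N \in \mathbb{N} with A \subset (FU)^N. -/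
open Pointwise

/-- If every identity neighborhood together with some countable set generates `G`, and `A`
is contained in some member of every nested exhausting open sequence `(V_n)` with
`V_n V_n ⊆ V_{n+1}`, then `A` satisfies Rosendal's criterion: for every identity
neighborhood `U` there are a finite `F` and `N` with `A ⊆ (FU)^N`. -/
theorem stmt5 {G : Type} [Group G] [TopologicalSpace G] [IsTopologicalGroup G]
    (hgen : ∀ U ∈ nhds (1 : G), ∃ C : Set G, C.Countable ∧ Subgroup.closure (U ∪ C) = ⊤)
    (A : Set G)
    (hA : ∀ V : ℕ → Set G, (∀ n, IsOpen (V n)) → (∀ n, V n ⊆ V (n + 1)) →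
      (⋃ n, V n) = Set.univ → (∀ n, V n * V n ⊆ V (n + 1)) → ∃ n, A ⊆ V n) :
    ∀ U ∈ nhds (1 : G), ∃ (F : Set G) (N : ℕ), F.Finite ∧
      A ⊆ ⋃ (ℓ : ℕ) (_ : ℓ ≤ N), (F * U) ^ ℓ := by
  intro U hU
  -- symmetric open identity neighborhood inside U
  set D : Set G := interior U ∩ (interior U)⁻¹ with hDdef
  have hDopen : IsOpen D := isOpen_interior.inter isOpen_interior.inv
  have h1int : (1 : G) ∈ interior U := mem_interior_iff_mem_nhds.2 hU
  have hD1 : (1 : G) ∈ D := ⟨h1int, by simpa using h1int⟩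
  have hDsymm : D⁻¹ = D := by
    rw [hDdef, Set.inter_inv, inv_inv, Set.inter_comm]
  have hDU : D ⊆ U := fun x hx => interior_subset hx.1
  obtain ⟨C, hCcount, hCgen⟩ := hgen D (hDopen.mem_nhds hD1)
  obtain ⟨f, hCf⟩ : ∃ f : ℕ → G, C ⊆ Set.range f :=
    Set.countable_iff_exists_subset_range.1 hCcount
  -- finite symmetric sets
  set F : ℕ → Set G := fun n => ({1} ∪ f '' Set.Iic n) ∪ (f '' Set.Iic n)⁻¹ with hFdef
  have hFfin : ∀ n, (F n).Finite := fun n =>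
    (((Set.finite_singleton 1).union ((Set.finite_Iic n).image f)).union
      (((Set.finite_Iic n).image f).inv))
  have hF1 : ∀ n, (1 : G) ∈ F n := fun n => Or.inl (Or.inl rfl)
  have hFmono : ∀ m n, m ≤ n → F m ⊆ F n := by
    intro m n hmn x hx
    rcases hx with (h | h) | h
    · exact Or.inl (Or.inl h)
    · exact Or.inl (Or.inr (Set.image_mono (Set.Iic_subset_Iic.2 hmn) h))
    · exact Or.inr (Set.inv_subset_inv.2 (Set.image_mono (Set.Iic_subset_Iic.2 hmn)) h)
  have hFsymm : ∀ n, (F n)⁻¹ ⊆ F n := by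
    intro n x hx
    rcases hx with (h | h) | h
    · exact Or.inl (Or.inl (by simpa using h))
    · exact Or.inr (by simpa using h)
    · exact Or.inl (Or.inr (by simpa [Set.mem_inv] using h))
  set V : ℕ → Set G := fun n => (F n * D) ^ (2 ^ n) with hVdef
  have h1FD : ∀ n, (1 : G) ∈ F n * D := fun n => ⟨1, hF1 n, 1, hD1, by simp⟩
  have hVopen : ∀ n, IsOpen (V n) := by
    intro n
    have h2 : 2 ^ n = (2 ^ n - 1) + 1 := (Nat.succ_pred_eq_of_pos (Nat.two_pow_pos n)).symm
    rw [hVdef]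
    simp only
    rw [h2, pow_succ]
    exact IsOpen.mul_left (hDopen.mul_left)
  have hVmono : ∀ n, V n ⊆ V (n + 1) := by
    intro n
    exact Set.pow_subset_pow
      (Set.mul_subset_mul_right (hFmono n (n + 1) (Nat.le_succ n)))
      (h1FD (n + 1)) (Nat.pow_le_pow_right (by norm_num) (Nat.le_succ n))
  have hVsq : ∀ n, V n * V n ⊆ V (n + 1) := by
    intro n
    have : V n * V n = (F n * D) ^ (2 ^ n + 2 ^ n) := by rw [pow_add]
    rw [this]
    have h2 : 2 ^ n + 2 ^ n = 2 ^ (n + 1) := by ring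
    rw [h2]
    exact Set.pow_subset_pow_left (Set.mul_subset_mul_right (hFmono n (n + 1) (Nat.le_succ n)))
  -- V exhausts G
  have hVunion : (⋃ n, V n) = Set.univ := by
    apply Set.eq_univ_of_forall
    intro g
    have hg : g ∈ Subgroup.closure (D ∪ C) := by rw [hCgen]; trivial
    rw [Set.mem_iUnion]
    induction hg using Subgroup.closure_induction with
    | mem x hx =>
      rcases hx with hx | hx
      · exact ⟨0, by
          refine Set.pow_subset_pow_right (h1FD 0) (Nat.one_le_two_pow) ?_
          simpa only [pow_one] using (Set.mem_mul.2 ⟨1, hF1 0, x, hx, by simp⟩ : x ∈ F 0 * D)⟩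
      · obtain ⟨k, rfl⟩ := hCf hx
        refine ⟨k, Set.pow_subset_pow_right (h1FD k) (Nat.one_le_two_pow) ?_⟩
        have : f k ∈ F k := Or.inl (Or.inr ⟨k, le_refl k, rfl⟩)
        simpa only [pow_one] using (Set.mem_mul.2 ⟨f k, this, 1, hD1, by simp⟩ : f k ∈ F k * D)
    | one => exact ⟨0, Set.one_mem_pow (h1FD 0)⟩
    | mul x y _ _ hx hy =>
      obtain ⟨m, hm⟩ := hx
      obtain ⟨n, hn⟩ := hy
      have hxm : x ∈ V (max m n) := by
        refine Set.pow_subset_pow (Set.mul_subset_mul_right (hFmono m _ (le_max_left m n)))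
          (h1FD _) (Nat.pow_le_pow_right (by norm_num) (le_max_left m n)) hm
      have hyn : y ∈ V (max m n) := by
        refine Set.pow_subset_pow (Set.mul_subset_mul_right (hFmono n _ (le_max_right m n)))
          (h1FD _) (Nat.pow_le_pow_right (by norm_num) (le_max_right m n)) hn
      exact ⟨max m n + 1, hVsq _ (Set.mul_mem_mul hxm hyn)⟩
    | inv x _ hx =>
      obtain ⟨n, hn⟩ := hx
      refine ⟨n + 1, ?_⟩
      have hinv : x⁻¹ ∈ ((F n * D) ^ (2 ^ n))⁻¹ := Set.inv_mem_inv.2 hn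
      rw [← inv_pow, mul_inv_rev, hDsymm] at hinv
      have hsub : D * (F n)⁻¹ ⊆ (F (n + 1) * D) ^ 2 := by
        rintro z ⟨d, hd, y, hy, rfl⟩
        have hyF : y ∈ F (n + 1) := hFmono n (n + 1) (Nat.le_succ n) (hFsymm n hy)
        have h1 : d ∈ F (n + 1) * D := ⟨1, hF1 _, d, hd, by simp⟩
        have h2 : y ∈ F (n + 1) * D := ⟨y, hyF, 1, hD1, by simp⟩
        rw [sq]
        exact Set.mul_mem_mul h1 h2
      have := Set.pow_subset_pow_left hsub hinv
      rw [← pow_mul] at this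
      have h2 : 2 * 2 ^ n = 2 ^ (n + 1) := by ring
      rwa [h2] at this
  obtain ⟨n, hAn⟩ := hA V hVopen hVmono hVunion hVsq
  refine ⟨F n, 2 ^ n, hFfin n, ?_⟩
  intro a ha
  rw [Set.mem_iUnion₂]
  refine ⟨2 ^ n, le_refl _, ?_⟩
  exact Set.pow_subset_pow_left (Set.mul_subset_mul_left hDU) (hAn ha)
end

section
/- Let G be a topological group and A \subset G. Suppose that for every identity neighborhood U there exist a finite set F and N with A \subset (FU)^N. Then for every nested sequence of open sets V_1 \subset V_2 \subset \cdots exhausting G with V_n V_n \subset V_{n+1} for all n, there exists m with A \subset V_m. -/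
open Pointwise

/-- If for every identity neighborhood `U` there are a finite `F` and `N` with
`A ⊆ (FU)^N`, then `A` is contained in some member of every nested exhausting open
sequence `(V_n)` with `V_n V_n ⊆ V_{n+1}`. -/
theorem stmt6 {G : Type} [Group G] [TopologicalSpace G] (A : Set G)
    (hA : ∀ U ∈ nhds (1 : G), ∃ (F : Set G) (N : ℕ), F.Finite ∧
      A ⊆ ⋃ (ℓ : ℕ) (_ : ℓ ≤ N), (F * U) ^ ℓ) :
    ∀ V : ℕ → Set G, (∀ n, IsOpen (V n)) → (∀ n, V n ⊆ V (n + 1)) →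
      (⋃ n, V n) = Set.univ → (∀ n, V n * V n ⊆ V (n + 1)) → ∃ m, A ⊆ V m := by
  intro V hopen hmono' hexh hsq
  have hmono : Monotone V := monotone_nat_of_le_succ hmono'
  -- 1 belongs to some V n0
  have h1 : ∃ n0, (1 : G) ∈ V n0 := by
    have : (1 : G) ∈ ⋃ n, V n := hexh ▸ Set.mem_univ 1
    simpa using this
  obtain ⟨n0, hn0⟩ := h1
  obtain ⟨F, N, hF, hsub⟩ := hA (V n0) ((hopen n0).mem_nhds hn0)
  -- F is contained in some V k
  have hFk : ∃ k, F ⊆ V k := by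
    refine Set.Finite.induction_on (motive := fun s _ => ∃ k, s ⊆ V k) F hF ⟨0, by simp⟩ ?_
    rintro a s _ _ ⟨k, hk⟩
    have : a ∈ ⋃ n, V n := hexh ▸ Set.mem_univ a
    obtain ⟨ka, hka⟩ := by simpa using this
    exact ⟨max k ka, Set.insert_subset (hmono (le_max_right _ _) hka)
      (hk.trans (hmono (le_max_left _ _)))⟩
  obtain ⟨k, hk⟩ := hFk
  set j := max k n0 with hj
  have hFU : F * V n0 ⊆ V (j + 1) := by
    refine (Set.mul_subset_mul (hk.trans (hmono (le_max_left _ _)))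
      (hmono (le_max_right k n0))).trans (hsq j)
  have h1j : (1 : G) ∈ V (j + 1) := hmono (Nat.le_succ_of_le (le_max_right k n0)) hn0
  -- powers of V (j+1)
  have hpow : ∀ ℓ : ℕ, (V (j + 1)) ^ ℓ ⊆ V (j + 1 + ℓ) := by
    intro ℓ
    induction ℓ with
    | zero => simpa using h1j
    | succ n ih =>
      rw [pow_succ]
      calc V (j+1) ^ n * V (j+1) ⊆ V (j+1+n) * V (j+1+n) :=
            Set.mul_subset_mul ih (hmono (by omega))
        _ ⊆ V (j+1+n+1) := hsq _
        _ = V (j+1+(n+1)) := by ring_nf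
  refine ⟨j + 1 + N, fun x hx => ?_⟩
  obtain ⟨ℓ, hℓN, hxl⟩ := by simpa using hsub hx
  have : x ∈ (V (j+1)) ^ ℓ := Set.pow_subset_pow_left hFU hxl
  exact hmono (by omega) (hpow ℓ this)
end

section
/- Every Polish group that is generated by a coarsely bounded subset has a coarsely bounded open identity neighborhood (i.e. boundedly generated Polish groups are locally bounded). -/
open Pointwise

/-- A subset `A` of a topological group `G` is coarsely bounded in `G` if every orbit of
`A` under every continuous isometric action of `G` on a metric space is bounded. -/
def CoarselyBounded (G : Type) [Group G] [TopologicalSpace G] (A : Set G) : Prop :=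
  ∀ (X : Type) [MetricSpace X] [MulAction G X],
    Continuous (fun p : G × X => p.1 • p.2) →
    (∀ g : G, Isometry (fun x : X => g • x)) →
    ∀ x : X, Bornology.IsBounded ((fun g => g • x) '' A)

/-- Every Polish group generated by a coarsely bounded set has a coarsely bounded open
identity neighborhood (boundedly generated implies locally bounded). -/
theorem stmt7 {G : Type} [Group G] [TopologicalSpace G] [IsTopologicalGroup G]
    [PolishSpace G] (S : Set G) (hS : CoarselyBounded G S)
    (hgen : Subgroup.closure S = ⊤) :
    ∃ U : Set G, IsOpen U ∧ (1 : G) ∈ U ∧ CoarselyBounded G U := by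
  classical
  set W : Set G := (S ∪ S⁻¹) ∪ {1} with hWdef
  have h1W : (1 : G) ∈ W := by simp [hWdef]
  -- the closures of powers of `W` cover `G`
  have hcover : (⋃ n : ℕ, closure (W ^ n)) = Set.univ := by
    refine Set.eq_univ_of_forall fun g => ?_
    have hg : g ∈ Submonoid.closure (S ∪ S⁻¹) := by
      rw [← Subgroup.closure_toSubmonoid]
      exact hgen ▸ Subgroup.mem_top g
    obtain ⟨l, hl, hlp⟩ := Submonoid.exists_list_of_mem_closure hg
    have : g ∈ W ^ l.length := by
      rw [← hlp]
      clear hlp hg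
      induction l with
      | nil => simp
      | cons a t ih =>
          simp only [List.prod_cons, List.length_cons, pow_succ']
          exact Set.mul_mem_mul (Set.mem_union_left _ (hl a List.mem_cons_self))
            (ih fun y hy => hl y (List.mem_cons_of_mem a hy))
    exact Set.mem_iUnion.2 ⟨l.length, subset_closure this⟩
  haveI : BaireSpace G := by
    letI := TopologicalSpace.upgradeIsCompletelyMetrizable G
    infer_instance
  obtain ⟨n, hn⟩ := nonempty_interior_of_iUnion_of_closed
    (fun n : ℕ => isClosed_closure (s := W ^ n)) hcover
  obtain ⟨v, hv⟩ := hn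
  refine ⟨v⁻¹ • interior (closure (W ^ n)), isOpen_interior.smul v⁻¹, ⟨v, hv, by simp⟩, ?_⟩
  intro X _ _ hcont hiso x
  -- basic facts about the displacement function `f g = dist (g • x) x`
  set f : G → ℝ := fun g => dist (g • x) x with hf
  have hfc : Continuous f := (hcont.comp (continuous_id.prodMk continuous_const)).dist
    continuous_const
  have hmul : ∀ a b : G, f (a * b) ≤ f a + f b := by
    intro a b
    calc f (a * b) = dist (a • b • x) x := by simp only [hf, mul_smul]
    _ ≤ dist (a • b • x) (a • x) + dist (a • x) x := dist_triangle _ _ _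
    _ = f b + f a := by rw [(hiso a).dist_eq]
    _ = f a + f b := add_comm _ _
  have hinv : ∀ a : G, f a⁻¹ = f a := by
    intro a
    have := (hiso a).dist_eq (a⁻¹ • x) x
    simp only [smul_inv_smul] at this
    rw [hf]; simp only [← this, dist_comm]
  -- a uniform bound on `f` over `S`, hence over `W`
  obtain ⟨C, hC⟩ := (hS X hcont hiso x).subset_closedBall x
  have hWb : ∀ g ∈ W, f g ≤ max C 0 := by
    intro g hg
    rcases hg with (hg | hg) | hg
    · exact le_max_of_le_left (by simpa [hf, dist_comm] using hC ⟨g, hg, rfl⟩)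
    · rw [← hinv g]
      exact le_max_of_le_left (by simpa [hf, dist_comm] using hC ⟨g⁻¹, hg, rfl⟩)
    · simp only [Set.mem_singleton_iff] at hg
      subst hg; simp [hf]
  -- bound over powers of `W`
  have hpow : ∀ k : ℕ, ∀ g ∈ W ^ k, f g ≤ k * max C 0 := by
    intro k
    induction k with
    | zero => intro g hg; simp only [pow_zero, Set.mem_one] at hg; subst hg; simp [hf]
    | succ m ih =>
        intro g hg
        rw [pow_succ] at hg
        obtain ⟨a, ha, b, hb, rfl⟩ := hg
        calc f (a * b) ≤ f a + f b := hmul a b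
        _ ≤ m * max C 0 + max C 0 := add_le_add (ih a ha) (hWb b hb)
        _ = (m + 1 : ℕ) * max C 0 := by push_cast; ring
  -- bound over the closure
  have hclos : ∀ g ∈ closure (W ^ n), f g ≤ n * max C 0 := by
    intro g hg
    have : closure (W ^ n) ⊆ {g | f g ≤ n * max C 0} :=
      closure_minimal (fun g hg => hpow n g hg) (isClosed_le hfc continuous_const)
    exact this hg
  -- final bound over the translated neighborhood
  rw [Metric.isBounded_iff_subset_closedBall x]
  refine ⟨f v⁻¹ + n * max C 0, ?_⟩
  rintro _ ⟨g, hg, rfl⟩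
  obtain ⟨w, hw, rfl⟩ := hg
  have hwcl : w ∈ closure (W ^ n) := interior_subset hw
  have : f (v⁻¹ * w) ≤ f v⁻¹ + n * max C 0 :=
    (hmul v⁻¹ w).trans (add_le_add le_rfl (hclos w hwcl))
  simpa [hf, Metric.mem_closedBall, dist_comm, smul_eq_mul] using this
end

section
/- Let G be a locally bounded Polish group. Then G is boundedly generated if and only if every ascending chain of open subgroups G_1 \le G_2 \le \cdots with union equal to G satisfies G_n = G for some n. -/
open Pointwise

section ChainMetric
set_option linter.unusedSectionVars false
variable {G : Type} [Group G]

/-- distance on G from a chain of subgroups -/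
noncomputable def chainD (H : ℕ → Subgroup G) (g h : G) : ℕ := sInf {n | g⁻¹ * h ∈ H n}

variable {H : ℕ → Subgroup G}

lemma chainD_set_nonempty (hexh : (⋃ n, (H n : Set G)) = Set.univ) (g h : G) :
    {n | g⁻¹ * h ∈ H n}.Nonempty := by
  have : g⁻¹ * h ∈ ⋃ n, (H n : Set G) := hexh ▸ Set.mem_univ _
  exact (by simpa using this : ∃ i, g⁻¹ * h ∈ H i)

lemma chainD_mem (hexh : (⋃ n, (H n : Set G)) = Set.univ) (g h : G) :
    g⁻¹ * h ∈ H (chainD H g h) :=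
  Nat.sInf_mem (chainD_set_nonempty hexh g h)

lemma chainD_le {g h : G} {n : ℕ} (hn : g⁻¹ * h ∈ H n) : chainD H g h ≤ n :=
  Nat.sInf_le hn

lemma chainD_self (g : G) : chainD H g g = 0 := by
  have : 0 ∈ {n | g⁻¹ * g ∈ H n} := by
    simp only [Set.mem_setOf_eq, inv_mul_cancel]
    exact (H 0).one_mem
  exact Nat.le_zero.mp (Nat.sInf_le this)

lemma chainD_comm (g h : G) : chainD H g h = chainD H h g := by
  unfold chainD
  congr 1
  ext n
  constructor <;> intro hm <;> simpa using (H n).inv_mem hm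

lemma chainD_triangle (hmono : Monotone H) (hexh : (⋃ n, (H n : Set G)) = Set.univ)
    (g h k : G) : chainD H g k ≤ max (chainD H g h) (chainD H h k) := by
  have h1 : g⁻¹ * h ∈ H (max (chainD H g h) (chainD H h k)) :=
    hmono (le_max_left _ _) (chainD_mem hexh g h)
  have h2 : h⁻¹ * k ∈ H (max (chainD H g h) (chainD H h k)) :=
    hmono (le_max_right _ _) (chainD_mem hexh h k)
  have : g⁻¹ * k ∈ H (max (chainD H g h) (chainD H h k)) := by
    have := (H _).mul_mem h1 h2
    simpa [mul_assoc] using this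
  exact chainD_le this

lemma chainD_left (a g h : G) : chainD H (a * g) (a * h) = chainD H g h := by
  unfold chainD
  congr 1
  ext n
  simp [mul_assoc]

lemma chainD_coset (hmono : Monotone H) {g h g' h' : G}
    (hg : g⁻¹ * g' ∈ H 0) (hh : h⁻¹ * h' ∈ H 0) :
    chainD H g h = chainD H g' h' := by
  unfold chainD
  congr 1
  ext n
  have hk : g⁻¹ * g' ∈ H n := hmono (Nat.zero_le n) hg
  have hl : h⁻¹ * h' ∈ H n := hmono (Nat.zero_le n) hh
  constructor
  · intro hm
    have := (H n).mul_mem ((H n).mul_mem ((H n).inv_mem hk) hm) hl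
    simpa [mul_assoc] using this
  · intro hm
    have := (H n).mul_mem ((H n).mul_mem hk hm) ((H n).inv_mem hl)
    simpa [mul_assoc] using this

/-- A type synonym for the left coset space of the first subgroup of the chain,
carrying no topology. -/
def ChainSpace (H : ℕ → Subgroup G) : Type := G ⧸ H 0

instance : MulAction G (ChainSpace H) := inferInstanceAs (MulAction G (G ⧸ H 0))

/-- canonical map to the coset space -/
def ChainSpace.mk (H : ℕ → Subgroup G) (g : G) : ChainSpace H :=
  QuotientGroup.mk (s := H 0) g

/-- representative of a coset -/
noncomputable def ChainSpace.rep (x : ChainSpace H) : G :=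
  Quotient.out (show G ⧸ H 0 from x)

lemma ChainSpace.mk_eq {g h : G} : ChainSpace.mk H g = ChainSpace.mk H h ↔ g⁻¹ * h ∈ H 0 :=
  QuotientGroup.eq

lemma ChainSpace.mk_rep (x : ChainSpace H) : ChainSpace.mk H x.rep = x :=
  QuotientGroup.out_eq' (show G ⧸ H 0 from x)

lemma ChainSpace.smul_mk (g a : G) : g • ChainSpace.mk H a = ChainSpace.mk H (g * a) :=
  MulAction.Quotient.smul_mk (H 0) g a

lemma ChainSpace.rep_spec (g : G) : g⁻¹ * (ChainSpace.mk H g).rep ∈ H 0 :=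
  ChainSpace.mk_eq.mp (ChainSpace.mk_rep (ChainSpace.mk H g)).symm

lemma chainD_rep (hmono : Monotone H) (g h : G) :
    chainD H (ChainSpace.mk H g).rep (ChainSpace.mk H h).rep = chainD H g h :=
  chainD_coset hmono
    (by simpa [mul_inv_rev] using (H 0).inv_mem (ChainSpace.rep_spec (H := H) g))
    (by simpa [mul_inv_rev] using (H 0).inv_mem (ChainSpace.rep_spec (H := H) h))

/-- the chain metric on the coset space -/
noncomputable def chainMetric (hmono : Monotone H)
    (hexh : (⋃ n, (H n : Set G)) = Set.univ) : MetricSpace (ChainSpace H) where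
  dist x y := chainD H x.rep y.rep
  dist_self x := by simp [chainD_self]
  dist_comm x y := by rw [chainD_comm]
  dist_triangle x y z := by
    have h1 := chainD_triangle hmono hexh x.rep y.rep z.rep
    have h2 : (max (chainD H x.rep y.rep) (chainD H y.rep z.rep) : ℝ)
        ≤ chainD H x.rep y.rep + chainD H y.rep z.rep := by
      rcases max_cases (chainD H x.rep y.rep : ℝ) (chainD H y.rep z.rep) with ⟨he, _⟩ | ⟨he, _⟩ <;>
        rw [he]
      · exact le_add_of_nonneg_right (Nat.cast_nonneg _)
      · exact le_add_of_nonneg_left (Nat.cast_nonneg _)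
    calc ((chainD H x.rep z.rep : ℕ) : ℝ)
        ≤ (max (chainD H x.rep y.rep) (chainD H y.rep z.rep) : ℕ) := by exact_mod_cast h1
      _ ≤ _ := by push_cast [Nat.cast_max]; exact h2
  eq_of_dist_eq_zero := by
    intro x y hxy
    simp only [Nat.cast_eq_zero] at hxy
    have h0 : x.rep⁻¹ * y.rep ∈ H 0 := by
      rcases Nat.sInf_eq_zero.mp hxy with h | h
      · exact h
      · exact absurd (chainD_set_nonempty hexh x.rep y.rep) (by rw [h]; simp)
    rw [← ChainSpace.mk_rep x, ← ChainSpace.mk_rep y]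
    exact ChainSpace.mk_eq.mpr h0

lemma chainMetric_dist (hmono : Monotone H) (hexh : (⋃ n, (H n : Set G)) = Set.univ)
    (x y : ChainSpace H) :
    @dist _ (chainMetric hmono hexh).toDist x y = chainD H x.rep y.rep := rfl

lemma chainMetric_dist_mk (hmono : Monotone H) (hexh : (⋃ n, (H n : Set G)) = Set.univ)
    (g h : G) :
    @dist _ (chainMetric hmono hexh).toDist (ChainSpace.mk H g) (ChainSpace.mk H h)
      = chainD H g h := by
  rw [chainMetric_dist, chainD_rep hmono]

end ChainMetric


/-- A locally bounded Polish group is boundedly generated iff every ascending exhausting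
chain of open subgroups terminates at `G` after finitely many steps. -/
theorem stmt9 {G : Type} [Group G] [TopologicalSpace G] [IsTopologicalGroup G]
    [PolishSpace G]
    (hlb : ∃ U : Set G, IsOpen U ∧ (1 : G) ∈ U ∧ CoarselyBounded G U) :
    (∃ S : Set G, CoarselyBounded G S ∧ Subgroup.closure S = ⊤) ↔
      (∀ H : ℕ → Subgroup G, (∀ n, IsOpen (H n : Set G)) → Monotone H →
        (⋃ n, (H n : Set G)) = Set.univ → ∃ n, H n = ⊤) := by
  constructor
  · rintro ⟨S, hScb, hSgen⟩ H hopen hmono hexh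
    letI M : MetricSpace (ChainSpace H) := chainMetric hmono hexh
    -- singletons are neighborhoods
    have hsingle : ∀ x : ChainSpace H, {x} ∈ nhds x := by
      intro x
      refine Filter.mem_of_superset (Metric.ball_mem_nhds x one_pos) ?_
      intro y hy
      rw [Metric.mem_ball, chainMetric_dist hmono hexh] at hy
      have h0 : chainD H y.rep x.rep = 0 := (Nat.cast_lt_one (α := ℝ)).mp hy
      have hd : dist y x = 0 := by rw [chainMetric_dist hmono hexh, h0]; simp
      simpa using dist_eq_zero.mp hd
    -- isometry
    have hisom : ∀ g : G, Isometry (fun x : ChainSpace H => g • x) := by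
      intro g
      apply Isometry.of_dist_eq
      intro x y
      conv_lhs => rw [← ChainSpace.mk_rep x, ← ChainSpace.mk_rep y]
      rw [ChainSpace.smul_mk, ChainSpace.smul_mk, chainMetric_dist_mk hmono hexh,
        chainD_left, ← chainD_rep hmono (H := H) x.rep y.rep,
        ChainSpace.mk_rep, ChainSpace.mk_rep]
      rfl
    -- continuity
    have hcont : Continuous (fun p : G × ChainSpace H => p.1 • p.2) := by
      rw [continuous_iff_continuousAt]
      rintro ⟨g₀, x₀⟩
      have hOopen : IsOpen {g : G | x₀.rep⁻¹ * g⁻¹ * g₀ * x₀.rep ∈ H 0} := by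
        have hc : Continuous (fun g : G => x₀.rep⁻¹ * g⁻¹ * g₀ * x₀.rep) := by continuity
        exact (hopen 0).preimage hc
      have hg₀mem : g₀ ∈ {g : G | x₀.rep⁻¹ * g⁻¹ * g₀ * x₀.rep ∈ H 0} := by
        simp only [Set.mem_setOf_eq]
        have he : x₀.rep⁻¹ * g₀⁻¹ * g₀ * x₀.rep = 1 := by group
        rw [he]; exact (H 0).one_mem
      have hmemnhds : {g : G | x₀.rep⁻¹ * g⁻¹ * g₀ * x₀.rep ∈ H 0} ×ˢ ({x₀} : Set (ChainSpace H))
          ∈ nhds (g₀, x₀) := by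
        rw [nhds_prod_eq]
        exact Filter.prod_mem_prod (hOopen.mem_nhds hg₀mem) (hsingle x₀)
      have key : Filter.Tendsto (fun p : G × ChainSpace H => p.1 • p.2)
          (nhds (g₀, x₀)) (nhds (g₀ • x₀)) := by
        refine Filter.Tendsto.congr' ?_ tendsto_const_nhds
        refine Filter.eventuallyEq_of_mem hmemnhds ?_
        rintro ⟨g, x⟩ ⟨hg, hx⟩
        simp only [Set.mem_singleton_iff] at hx
        subst hx
        simp only [Set.mem_setOf_eq] at hg
        show g₀ • x = g • x
        conv_lhs => rw [← ChainSpace.mk_rep x]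
        conv_rhs => rw [← ChainSpace.mk_rep x]
        rw [ChainSpace.smul_mk, ChainSpace.smul_mk, ChainSpace.mk_eq]
        have he : (g₀ * x.rep)⁻¹ * (g * x.rep) = (x.rep⁻¹ * g⁻¹ * g₀ * x.rep)⁻¹ := by group
        rw [he]
        exact (H 0).inv_mem hg
      exact key
    -- apply coarse boundedness
    have hb := hScb (ChainSpace H) hcont hisom (ChainSpace.mk H 1)
    obtain ⟨r, hr⟩ := hb.subset_closedBall (ChainSpace.mk H 1)
    refine ⟨⌈r⌉₊, ?_⟩
    have hsub : S ⊆ (H ⌈r⌉₊ : Set G) := by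
      intro s hs
      have h1 : s • ChainSpace.mk H 1 ∈ Metric.closedBall (ChainSpace.mk H 1) r :=
        hr ⟨s, hs, rfl⟩
      rw [Metric.mem_closedBall, ChainSpace.smul_mk, mul_one,
        chainMetric_dist_mk hmono hexh] at h1
      have h2 : chainD H s 1 ≤ ⌈r⌉₊ := by
        have : (chainD H s 1 : ℝ) ≤ (⌈r⌉₊ : ℝ) := h1.trans (Nat.le_ceil r)
        exact_mod_cast this
      have h3 : s⁻¹ ∈ H (chainD H s 1) := by simpa using chainD_mem hexh s 1
      have h4 : s ∈ H (chainD H s 1) := by simpa using (H _).inv_mem h3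
      exact hmono h2 h4
    exact eq_top_iff.mpr (hSgen ▸ (Subgroup.closure_le _).mpr hsub)
  · intro hchain
    obtain ⟨U, hUo, hU1, hUcb⟩ := hlb
    haveI : Nonempty G := ⟨1⟩
    set u : ℕ → G := TopologicalSpace.denseSeq G with hu
    set H : ℕ → Subgroup G := fun n => Subgroup.closure (U ∪ u '' Set.Iio n) with hH
    have hUle : ∀ n, U ⊆ (H n : Set G) := fun n =>
      (Set.subset_union_left).trans Subgroup.subset_closure
    have hopen : ∀ n, IsOpen (H n : Set G) := by
      intro n
      apply Subgroup.isOpen_of_mem_nhds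
      exact Filter.mem_of_superset (hUo.mem_nhds hU1) (hUle n)
    have hmono : Monotone H := by
      intro m n hmn
      apply Subgroup.closure_mono
      apply Set.union_subset_union_right
      exact Set.image_mono (fun x hx => lt_of_lt_of_le hx hmn)
    have hexh : (⋃ n, (H n : Set G)) = Set.univ := by
      have hdir : Directed (· ≤ ·) H := hmono.directed_le
      have hset : (⋃ n, (H n : Set G)) = ((⨆ n, H n : Subgroup G) : Set G) :=
        (Subgroup.coe_iSup_of_directed hdir).symm
      rw [hset]
      have hKopen : IsOpen ((⨆ n, H n : Subgroup G) : Set G) :=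
        Subgroup.isOpen_mono (le_iSup H 0) (hopen 0)
      have hKclosed : IsClosed ((⨆ n, H n : Subgroup G) : Set G) :=
        Subgroup.isClosed_of_isOpen _ hKopen
      have hrange : Set.range u ⊆ ((⨆ n, H n : Subgroup G) : Set G) := by
        rintro _ ⟨i, rfl⟩
        have : u i ∈ H (i + 1) := Subgroup.subset_closure
          (Set.mem_union_right _ ⟨i, by simp, rfl⟩)
        exact le_iSup H (i + 1) this
      have hdense : Dense ((⨆ n, H n : Subgroup G) : Set G) :=
        Dense.mono hrange (TopologicalSpace.denseRange_denseSeq G)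
      rw [← hKclosed.closure_eq]
      exact hdense.closure_eq
    obtain ⟨n, hn⟩ := hchain H hopen hmono hexh
    refine ⟨U ∪ u '' Set.Iio n, ?_, hn⟩
    intro X _ _ hcont hisom x
    rw [Set.image_union]
    apply Bornology.IsBounded.union
    · exact hUcb X hcont hisom x
    · apply Set.Finite.isBounded
      apply Set.Finite.image
      exact (Set.finite_Iio n).image u
end

section
/- If X is a second countable topological space, then there exists a countable ordinal \rho such that the Cantor--Bendixson derivative satisfies X^{\rho} = X^{\rho+1}. -/
/-- The `o`-th Cantor--Bendixson derivative of the space `X`: `X^0 = X`,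
`X^{α+1} = (X^α)'` (derived set), and `X^λ = ⋂_{α<λ} X^α` for limit `λ`. -/
noncomputable def cbDeriv (X : Type) [TopologicalSpace X] (o : Ordinal) : Set X :=
  Ordinal.limitRecOn o Set.univ (fun _ ih => derivedSet ih)
    (fun o _ ih => ⋂ (o' : Ordinal) (h : o' < o), ih o' h)

lemma cbDeriv_zero (X : Type) [TopologicalSpace X] : cbDeriv X 0 = Set.univ :=
  Ordinal.limitRecOn_zero _ _ _

lemma cbDeriv_succ (X : Type) [TopologicalSpace X] (o : Ordinal) :
    cbDeriv X (o + 1) = derivedSet (cbDeriv X o) :=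
  Ordinal.limitRecOn_succ _ _ _ _

lemma cbDeriv_limit (X : Type) [TopologicalSpace X] (o : Ordinal) (h : Order.IsSuccLimit o) :
    cbDeriv X o = ⋂ (o' : Ordinal) (_ : o' < o), cbDeriv X o' :=
  Ordinal.limitRecOn_limit _ _ _ _ h

lemma cbDeriv_anti (X : Type) [TopologicalSpace X] :
    ∀ β α : Ordinal, α ≤ β → cbDeriv X β ⊆ cbDeriv X α := by
  intro β
  induction β using Ordinal.induction with
  | h β IH =>
    intro α hαβ
    rcases Ordinal.zero_or_succ_or_isSuccLimit β with hβ | ⟨γ, rfl⟩ | hβ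
    · subst hβ
      obtain rfl : α = 0 := le_antisymm hαβ (zero_le (a := α))
      exact subset_rfl
    · rcases eq_or_lt_of_le hαβ with rfl | hlt
      · exact subset_rfl
      have hαγ : α ≤ γ := Order.lt_succ_iff.mp hlt
      rw [← Ordinal.add_one_eq_succ, cbDeriv_succ]
      -- show derivedSet (cbDeriv X γ) ⊆ cbDeriv X α for α ≤ γ
      clear hαβ hlt
      induction α using Ordinal.induction with
      | h α IH2 =>
        rcases Ordinal.zero_or_succ_or_isSuccLimit α with hα | ⟨ε, rfl⟩ | hα
        · subst hα; rw [cbDeriv_zero]; exact Set.subset_univ _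
        · have hεγ : ε < γ := Order.succ_le_iff.mp hαγ
          rw [← Ordinal.add_one_eq_succ, cbDeriv_succ]
          exact derivedSet_mono _ _ (IH γ (Order.lt_succ γ) ε hεγ.le)
        · rw [cbDeriv_limit X α hα]
          refine Set.subset_iInter₂ fun c hc => ?_
          exact IH2 c hc (le_trans hc.le hαγ)
    · rcases eq_or_lt_of_le hαβ with rfl | hlt
      · exact subset_rfl
      rw [cbDeriv_limit X β hβ]
      exact Set.iInter₂_subset α hlt

/-- If `X` is second countable, then some countable ordinal `ρ` has `X^ρ = X^{ρ+1}`. -/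
theorem stmt14 (X : Type) [TopologicalSpace X] [SecondCountableTopology X] :
    ∃ ρ : Ordinal, ρ.card ≤ Cardinal.aleph0 ∧ cbDeriv X ρ = cbDeriv X (ρ + 1) := by
  by_contra hcon
  push_neg at hcon
  set ω₁ : Ordinal := (Cardinal.aleph 1).ord with hω₁
  -- for each ρ < ω₁, pick an isolated point and a basis set
  have key : ∀ ρ : Ordinal, ρ < ω₁ → ∃ x : X, ∃ b ∈ TopologicalSpace.countableBasis X,
      x ∈ cbDeriv X ρ ∧ x ∉ cbDeriv X (ρ + 1) ∧ x ∈ b ∧ ∀ y ∈ b ∩ cbDeriv X ρ, y = x := by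
    intro ρ hρ
    have hcard : ρ.card ≤ Cardinal.aleph0 := by
      have := Cardinal.lt_ord.mp hρ
      rwa [← Cardinal.succ_aleph0, Order.lt_succ_iff] at this
    have hne := hcon ρ hcard
    have hsub : cbDeriv X (ρ + 1) ⊆ cbDeriv X ρ := cbDeriv_anti X (ρ + 1) ρ (Order.le_succ ρ)
    obtain ⟨x, hx, hx'⟩ : ∃ x, x ∈ cbDeriv X ρ ∧ x ∉ cbDeriv X (ρ + 1) := by
      by_contra h
      push_neg at h
      exact hne (le_antisymm (fun y hy => h y hy) hsub)
    have hx'' := hx'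
    rw [cbDeriv_succ, derivedSet, Set.mem_setOf_eq, accPt_iff_nhds] at hx''
    push_neg at hx''
    obtain ⟨U, hU, hU2⟩ := hx''
    obtain ⟨b, hb, hxb, hbU⟩ := (TopologicalSpace.isBasis_countableBasis X).mem_nhds_iff.mp hU
    refine ⟨x, b, hb, hx, hx', hxb, fun y hy => ?_⟩
    rcases eq_or_ne y x with h | h
    · exact h
    · exact absurd h (by simpa using hU2 y ⟨hbU hy.1, hy.2⟩)
  choose x b hb hx1 hx2 hxb hiso using key
  -- injective map from Iio ω₁ into the countable basis
  have hinj : Function.Injective (fun ρ : Set.Iio ω₁ => (⟨b ρ ρ.2, hb ρ ρ.2⟩ :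
      TopologicalSpace.countableBasis X)) := by
    rintro ⟨ρ, hρ⟩ ⟨σ, hσ⟩ h
    simp only [Subtype.mk.injEq] at h ⊢
    by_contra hne
    wlog hlt : ρ < σ generalizing ρ σ hρ hσ
    · exact this σ hσ ρ hρ h.symm (Ne.symm hne) ((Ne.lt_or_gt hne).resolve_left hlt)
    -- x σ ∈ b σ = b ρ, and x σ ∈ cbDeriv X σ ⊆ cbDeriv X ρ, so x σ = x ρ
    have h1 : x σ hσ ∈ b ρ hρ := h ▸ hxb σ hσ
    have h2 : x σ hσ ∈ cbDeriv X ρ := cbDeriv_anti X σ ρ hlt.le (hx1 σ hσ)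
    have h3 := hiso ρ hρ (x σ hσ) ⟨h1, h2⟩
    have h4 : x σ hσ ∈ cbDeriv X (ρ + 1) :=
      cbDeriv_anti X σ (ρ + 1) (Order.succ_le_iff.mpr hlt) (hx1 σ hσ)
    rw [h3] at h4
    exact hx2 ρ hρ h4
  have hcnt : Countable (Set.Iio ω₁) := by
    have : Countable (TopologicalSpace.countableBasis X) :=
      (TopologicalSpace.countable_countableBasis X).to_subtype
    exact Function.Injective.countable hinj
  have hmk := Ordinal.mk_Iio_ordinal ω₁
  rw [Cardinal.card_ord] at hmk
  have hle : Cardinal.mk (Set.Iio ω₁) ≤ Cardinal.aleph0 := Cardinal.mk_le_aleph0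
  rw [hmk, Cardinal.lift_le_aleph0] at hle
  exact absurd hle (not_le.mpr Cardinal.aleph0_lt_aleph_one)
end
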